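/- Let Δ, Ω : ℝ → ℝ be functions, let p̂ ∈ ℝ, and suppose Δ(p̂) > 0, Ω(p̂) > 0, and Δ and Ω have derivatives Δ' and Ω' at p̂ (HasDerivAt). Set y = √(Δ(p̂)) / Ω(p̂). Then there exists a real number d such that both functions f(p) = log(1 + Δ(p)/Ω(p)) and g(p) = log(1 + 2·y·√(Δ(p)) − y²·Ω(p)) have derivative d at p̂; in particular their first derivatives at p̂ coincide. (This is condition C2: the surrogate is tangent to the objective at the current point.) -/

import Mathlib

/-- Condition C2: the MM surrogate `g(p) = log(1 + 2y√(Δ p) − y²·Ω p)` with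
`y = √(Δ p̂)/Ω p̂` is tangent to the objective `f(p) = log(1 + Δ p / Ω p)`
at the current point `p̂`: the two functions have the same derivative there. -/
theorem surrogate_tangent_at_point (Δ Ω : ℝ → ℝ) (phat Δ' Ω' : ℝ)
    (hΔ : HasDerivAt Δ Δ' phat) (hΩ : HasDerivAt Ω Ω' phat)
    (hΔp : 0 < Δ phat) (hΩp : 0 < Ω phat) :
    ∃ d : ℝ,
      HasDerivAt (fun p => Real.log (1 + Δ p / Ω p)) d phat ∧
      HasDerivAt (fun p =>
        Real.log (1 + 2 * (Real.sqrt (Δ phat) / Ω phat) * Real.sqrt (Δ p)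
          - (Real.sqrt (Δ phat) / Ω phat) ^ 2 * Ω p)) d phat := by
  set y : ℝ := Real.sqrt (Δ phat) / Ω phat with hy
  have hΩne : Ω phat ≠ 0 := ne_of_gt hΩp
  have hΔne : Δ phat ≠ 0 := ne_of_gt hΔp
  have hs : Real.sqrt (Δ phat) > 0 := Real.sqrt_pos.mpr hΔp
  have hsne : Real.sqrt (Δ phat) ≠ 0 := ne_of_gt hs
  have hsq : Real.sqrt (Δ phat) ^ 2 = Δ phat := Real.sq_sqrt hΔp.le
  have hpos : 0 < 1 + Δ phat / Ω phat := by positivity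
  have hf : HasDerivAt (fun p => Real.log (1 + Δ p / Ω p))
      ((Δ' * Ω phat - Δ phat * Ω') / Ω phat ^ 2 / (1 + Δ phat / Ω phat)) phat :=
    ((hΔ.div hΩ hΩne).const_add 1).log (ne_of_gt hpos)
  refine ⟨_, hf, ?_⟩
  have hval : 1 + 2 * y * Real.sqrt (Δ phat) - y ^ 2 * Ω phat = 1 + Δ phat / Ω phat := by
    field_simp [hy]
    rw [hy]
    field_simp
    linear_combination hsq
  have hga : HasDerivAt (fun p =>
      1 + 2 * y * Real.sqrt (Δ p) - y ^ 2 * Ω p)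
      (2 * y * (Δ' / (2 * Real.sqrt (Δ phat))) - y ^ 2 * Ω') phat :=
    (((hΔ.sqrt hΔne).const_mul (2 * y)).const_add 1).sub (hΩ.const_mul (y ^ 2))
  have hg := hga.log (by rw [hval]; exact ne_of_gt hpos)
  convert hg using 1
  rw [hval, hy]
  rw [div_eq_div_iff (by positivity) (by positivity)]
  field_simp
  rw [hsq]
  ring
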